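/- The sequence of partial products N ↦ ∏_{k=0}^{N-1} (1/2) · tan(π·2^{-k-4}) · cot(π·2^{-k-5}) converges, as N → ∞, to (16/π)·√((2-√(2+√2))/(2+√(2+√2))). -/

import Mathlib

open Real Finset Filter Topology

lemma arg_lt (m : ℤ) (hm : m ≤ -4) : 0 < Real.pi * (2:ℝ)^m ∧ Real.pi * (2:ℝ)^m < Real.pi / 2 := by
  have h2 : (0:ℝ) < 2 := by norm_num
  have hp : (0:ℝ) < (2:ℝ)^m := zpow_pos h2 m
  constructor
  · positivity
  · have h1 : (2:ℝ)^m ≤ (2:ℝ)^(-4:ℤ) := zpow_le_zpow_right₀ (by norm_num) hm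
    rw [show ((2:ℝ)^(-4:ℤ)) = 1/16 by norm_num] at h1
    nlinarith [mul_le_mul_of_nonneg_left h1 Real.pi_pos.le, Real.pi_pos]

lemma tan_arg_pos (m : ℤ) (hm : m ≤ -4) : 0 < Real.tan (Real.pi * (2:ℝ)^m) :=
  Real.tan_pos_of_pos_of_lt_pi_div_two (arg_lt m hm).1 (arg_lt m hm).2

lemma sin_arg_ne (m : ℤ) (hm : m ≤ -4) : Real.sin (Real.pi * (2:ℝ)^m) ≠ 0 := by
  have h := arg_lt m hm
  exact ne_of_gt (Real.sin_pos_of_pos_of_lt_pi h.1 (by linarith [Real.pi_pos]))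

lemma cos_arg_ne (m : ℤ) (hm : m ≤ -4) : Real.cos (Real.pi * (2:ℝ)^m) ≠ 0 := by
  have h := arg_lt m hm
  exact ne_of_gt (Real.cos_pos_of_mem_Ioo ⟨by linarith [Real.pi_pos], h.2⟩)

lemma heq_pow (N : ℕ) : Real.pi * (2:ℝ)^(-(N:ℤ)-4) = Real.pi / (16 * (2:ℝ)^N) := by
  rw [zpow_sub₀ (by norm_num : (2:ℝ) ≠ 0), zpow_neg, zpow_natCast]
  rw [show ((2:ℝ)^(4:ℤ)) = 16 by norm_num]
  have : ((2:ℝ)^N) ≠ 0 := by positivity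
  field_simp

lemma closed_form (N : ℕ) :
    (∏ k ∈ Finset.range N,
      (1 / 2 : ℝ) * Real.tan (Real.pi * (2 : ℝ) ^ (-(k : ℤ) - 4)) *
        Real.cot (Real.pi * (2 : ℝ) ^ (-(k : ℤ) - 5))) =
    Real.tan (Real.pi / 16) / (2 ^ N * Real.tan (Real.pi * (2:ℝ) ^ (-(N:ℤ) - 4))) := by
  have hpi16 : Real.pi * (2:ℝ)^(-(0:ℤ) - 4) = Real.pi / 16 := by
    rw [show (-(0:ℤ)-4 : ℤ) = -4 by ring, show ((2:ℝ)^(-4:ℤ)) = 1/16 by norm_num]; ring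
  induction N with
  | zero =>
    simp only [Finset.prod_range_zero, Nat.cast_zero, pow_zero, one_mul]
    rw [hpi16]
    have ht : Real.tan (Real.pi / 16) ≠ 0 := by
      have := tan_arg_pos (-(0:ℤ)-4) (by omega); rw [hpi16] at this; exact ne_of_gt this
    field_simp
  | succ n ih =>
    rw [Finset.prod_range_succ, ih]
    have harg : (-(↑(n+1):ℤ) - 4) = (-(n:ℤ) - 5) := by push_cast; ring
    rw [harg]
    have hs1 := sin_arg_ne (-(n:ℤ) - 4) (by omega)
    have hc1 := cos_arg_ne (-(n:ℤ) - 4) (by omega)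
    have hs2 := sin_arg_ne (-(n:ℤ) - 5) (by omega)
    have hc2 := cos_arg_ne (-(n:ℤ) - 5) (by omega)
    generalize Real.tan (Real.pi / 16) = T
    rw [Real.cot_eq_cos_div_sin, Real.tan_eq_sin_div_cos (Real.pi * (2:ℝ)^(-(n:ℤ)-4)),
      Real.tan_eq_sin_div_cos (Real.pi * (2:ℝ)^(-(n:ℤ)-5)), pow_succ]
    field_simp

lemma tan_pi_div_sixteen :
    Real.tan (Real.pi / 16) =
      Real.sqrt ((2 - Real.sqrt (2 + Real.sqrt 2)) / (2 + Real.sqrt (2 + Real.sqrt 2))) := by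
  have h2 : Real.sqrt 2 ≤ 2 := by
    nlinarith [Real.sq_sqrt (show (0:ℝ) ≤ 2 by norm_num), Real.sqrt_nonneg 2]
  have h3 : Real.sqrt (2 + Real.sqrt 2) ≤ 2 := by
    nlinarith [Real.sq_sqrt (show (0:ℝ) ≤ 2 + Real.sqrt 2 by positivity),
      Real.sqrt_nonneg (2 + Real.sqrt 2)]
  have hnum : (0:ℝ) ≤ 2 - Real.sqrt (2 + Real.sqrt 2) := by linarith
  have hb : (0:ℝ) < Real.sqrt (2 + Real.sqrt (2 + Real.sqrt 2)) :=
    Real.sqrt_pos.mpr (by positivity)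
  rw [Real.tan_eq_sin_div_cos, Real.sin_pi_div_sixteen, Real.cos_pi_div_sixteen,
    Real.sqrt_div hnum]
  field_simp

theorem tan_product_pi_div_eight :
    Filter.Tendsto
      (fun N : ℕ => ∏ k ∈ Finset.range N,
        (1 / 2 : ℝ) * Real.tan (Real.pi * (2 : ℝ) ^ (-(k : ℤ) - 4)) *
          Real.cot (Real.pi * (2 : ℝ) ^ (-(k : ℤ) - 5)))
      Filter.atTop
      (𝓝 (16 / Real.pi *
        Real.sqrt ((2 - Real.sqrt (2 + Real.sqrt 2)) / (2 + Real.sqrt (2 + Real.sqrt 2))))) := by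
  have hpi := Real.pi_pos
  have htpos : ∀ N : ℕ, 0 < Real.pi * (2:ℝ)^(-(N:ℤ)-4) := fun N => (arg_lt _ (by omega)).1
  have ht0 : Tendsto (fun N : ℕ => Real.pi * (2:ℝ)^(-(N:ℤ)-4)) atTop (𝓝 0) := by
    simp only [heq_pow]
    have h : Tendsto (fun N : ℕ => (Real.pi / 16) * (1/2:ℝ)^N) atTop (𝓝 ((Real.pi/16) * 0)) :=
      (tendsto_pow_atTop_nhds_zero_of_lt_one (by norm_num) (by norm_num)).const_mul _
    rw [mul_zero] at h
    refine h.congr fun N => ?_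
    have : ((2:ℝ)^N) ≠ 0 := by positivity
    field_simp
    rw [← mul_pow]; norm_num
  have hslope : Tendsto (fun x : ℝ => Real.tan x / x) (𝓝[≠] 0) (𝓝 1) := by
    have hd : HasDerivAt Real.tan 1 0 := by
      have := Real.hasDerivAt_tan (x := 0) (by simp)
      simpa using this
    have := hasDerivAt_iff_tendsto_slope.mp hd
    refine this.congr' ?_
    filter_upwards [self_mem_nhdsWithin] with x hx
    simp [slope_def_field, Real.tan_zero]
  have htne : Tendsto (fun N : ℕ => Real.pi * (2:ℝ)^(-(N:ℤ)-4)) atTop (𝓝[≠] 0) := by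
    rw [tendsto_nhdsWithin_iff]
    exact ⟨ht0, Filter.Eventually.of_forall fun N => ne_of_gt (htpos N)⟩
  have h1 : Tendsto (fun N : ℕ =>
      Real.tan (Real.pi * (2:ℝ)^(-(N:ℤ)-4)) / (Real.pi * (2:ℝ)^(-(N:ℤ)-4))) atTop (𝓝 1) :=
    hslope.comp htne
  have h2 : Tendsto (fun N : ℕ =>
      (Real.pi * (2:ℝ)^(-(N:ℤ)-4)) / Real.tan (Real.pi * (2:ℝ)^(-(N:ℤ)-4))) atTop (𝓝 1) := by
    have := h1.inv₀ one_ne_zero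
    rw [inv_one] at this
    refine this.congr fun N => ?_
    rw [inv_div]
  have key : Tendsto
      (fun N : ℕ => Real.tan (Real.pi / 16) * (16 / Real.pi) *
        ((Real.pi * (2:ℝ)^(-(N:ℤ)-4)) / Real.tan (Real.pi * (2:ℝ)^(-(N:ℤ)-4))))
      atTop (𝓝 (Real.tan (Real.pi / 16) * (16 / Real.pi) * 1)) :=
    h2.const_mul _
  rw [mul_one, tan_pi_div_sixteen, mul_comm] at key
  refine key.congr fun N => ?_
  rw [← tan_pi_div_sixteen, closed_form N]
  have htanpos := tan_arg_pos (-(N:ℤ)-4) (by omega)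
  rw [heq_pow N] at htanpos ⊢
  have h2N : ((2:ℝ)^N) ≠ 0 := by positivity
  field_simp
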